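/- arXiv:2105.08368 — 6 statements merged into one kernel-verified Lean document; each statement's English description precedes it below -/
import Mathlib

section
/- With ψ defined as ψ(α) = inf_x { F(x) − inf F + α·D(x) }, ψ is right-continuous at 0 (i.e., ψ(α) → 0 as α → 0⁺) if and only if there exists a minimizing sequence (x_k) with F(x_k) → inf F and D(x_k) < +∞ for every k. -/
open Filter Set

/-- `ψ` is right-continuous at `0` iff there exists a minimizing sequence `(x_k)`
with `F(x_k) → inf F` and `D(x_k) < +∞` for every `k`. -/
theorem stmt_1 {V : Type*} [AddCommGroup V] [Module ℝ V]
    (F : V → EReal) (D : V → EReal) (x₀ : V) (m : ℝ)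
    (hlb : ∀ x, (m : EReal) ≤ F x) (hx₀ : F x₀ < ⊤)
    (hD : ∀ x, 0 ≤ D x) (hD₀ : D x₀ = 0)
    (ψ : ℝ → EReal)
    (hψ : ∀ α : ℝ, ψ α = ⨅ x : V, (F x - (⨅ y : V, F y) + (α : EReal) * D x)) :
    Tendsto ψ (nhdsWithin 0 (Set.Ioi 0)) (nhds 0) ↔
      ∃ x : ℕ → V,
        Tendsto (fun k => F (x k)) atTop (nhds (⨅ y : V, F y)) ∧
        ∀ k, D (x k) < ⊤ := by
  set M : EReal := ⨅ y : V, F y with hM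
  have hMle : ∀ x, M ≤ F x := fun x => iInf_le F x
  have hMlb : (m : EReal) ≤ M := le_iInf hlb
  have hMtop : M ≠ ⊤ := ((hMle x₀).trans_lt hx₀).ne
  have hMbot : M ≠ ⊥ := fun h => by simp [h] at hMlb
  set r : ℝ := M.toReal with hrdef
  have hr : (r : EReal) = M := EReal.coe_toReal hMtop hMbot
  have hsub_nonneg : ∀ x, (0 : EReal) ≤ F x - M := by
    intro x
    rw [← hr]
    exact (EReal.le_sub_iff_add_le (Or.inl (EReal.coe_ne_bot r))
      (Or.inl (EReal.coe_ne_top r))).2 (by rw [zero_add, hr]; exact hMle x)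
  have hψnonneg : ∀ α : ℝ, 0 ≤ α → (0 : EReal) ≤ ψ α := by
    intro α hα
    rw [hψ]
    refine le_iInf fun x => add_nonneg (hsub_nonneg x) ?_
    exact mul_nonneg (by exact_mod_cast hα) (hD x)
  constructor
  · intro h
    have key : ∀ k : ℕ, ∃ v : V,
        F v - M < ((1 : ℝ) / (k + 1) : ℝ) ∧ D v < ⊤ := by
      intro k
      have hc : (0 : EReal) < ((1 : ℝ) / (k + 1) : ℝ) := by
        exact_mod_cast (by positivity : (0:ℝ) < 1 / (k + 1))
      obtain ⟨α, hψα, hα⟩ :=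
        ((h.eventually_lt_const hc).and self_mem_nhdsWithin).exists
      rw [hψ] at hψα
      obtain ⟨v, hv⟩ := iInf_lt_iff.1 hψα
      have hαD : (0 : EReal) ≤ (α : EReal) * D v :=
        mul_nonneg (by exact_mod_cast (le_of_lt hα)) (hD v)
      refine ⟨v, lt_of_le_of_lt (le_add_of_nonneg_right hαD) hv, ?_⟩
      have hlt : (α : EReal) * D v < ⊤ := by
        refine lt_of_le_of_lt (le_add_of_nonneg_left (hsub_nonneg v)) (hv.trans ?_)
        exact lt_top_iff_ne_top.2 (EReal.coe_ne_top _)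
      by_contra htop
      rw [not_lt, top_le_iff] at htop
      rw [htop, EReal.coe_mul_top_of_pos hα] at hlt
      exact (lt_irrefl _ hlt).elim
    choose x hx1 hx2 using key
    refine ⟨x, ?_, hx2⟩
    have hupper : ∀ k : ℕ, F (x k) ≤ (((1 : ℝ) / (k + 1) + r : ℝ) : EReal) := by
      intro k
      have := (EReal.sub_lt_iff (Or.inl hMbot) (Or.inl hMtop)).1 (hx1 k)
      rw [← hr, ← EReal.coe_add] at this
      exact this.le
    have hg : Tendsto (fun k : ℕ => (((1 : ℝ) / (k + 1) + r : ℝ) : EReal)) atTop (nhds M) := by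
      rw [← hr]
      refine EReal.tendsto_coe.2 ?_
      have := tendsto_one_div_add_atTop_nhds_zero_nat.add (tendsto_const_nhds (x := r))
      simpa using this
    exact tendsto_of_tendsto_of_tendsto_of_le_of_le tendsto_const_nhds hg
      (fun k => hMle (x k)) hupper
  · rintro ⟨x, hx, hxD⟩
    rw [tendsto_order]
    constructor
    · intro b hb
      filter_upwards [self_mem_nhdsWithin] with α hα
      exact lt_of_lt_of_le hb (hψnonneg α (le_of_lt hα))
    · intro b hb
      obtain ⟨c, hc0, hcb⟩ := EReal.lt_iff_exists_real_btwn.1 hb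
      have hc0' : (0 : ℝ) < c := by exact_mod_cast hc0
      -- find k with F (x k) < M + c/2
      have hMlt : M < (((r + c / 2 : ℝ)) : EReal) := by
        rw [← hr]; exact_mod_cast (by linarith : r < r + c / 2)
      obtain ⟨k, hk⟩ := (hx.eventually_lt_const hMlt).exists
      -- D (x k) is a real number
      set d : ℝ := (D (x k)).toReal with hddef
      have hDbot : D (x k) ≠ ⊥ := fun h => by simpa [h] using hD (x k)
      have hd : (d : EReal) = D (x k) := EReal.coe_toReal (hxD k).ne hDbot
      have hd0 : 0 ≤ d := by
        rw [hrdef] at *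
        have := hD (x k); rw [← hd] at this; exact_mod_cast this
      -- F (x k) is a real number
      have hFtop : F (x k) ≠ ⊤ := (hk.trans_le le_top).ne
      have hFbot : F (x k) ≠ ⊥ := fun h => by simpa [h] using hlb (x k)
      set t : ℝ := (F (x k)).toReal with htdef
      have ht : (t : EReal) = F (x k) := EReal.coe_toReal hFtop hFbot
      have htlt : t < r + c / 2 := by
        rw [← ht] at hk; exact_mod_cast hk
      set α₀ : ℝ := (c / 2) / (d + 1) with hα₀def
      have hα₀pos : 0 < α₀ := by positivity
      filter_upwards [Ioc_mem_nhdsGT_of_mem (Set.left_mem_Ico.2 hα₀pos)] with α hα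
      obtain ⟨hα1, hα2⟩ := hα
      have hbound : ψ α ≤ (((t - r) + α * d : ℝ) : EReal) := by
        rw [hψ]
        refine le_trans (iInf_le _ (x k)) ?_
        rw [← ht, ← hr, ← hd, ← EReal.coe_sub, ← EReal.coe_mul, ← EReal.coe_add]
      have harith : (t - r) + α * d < c := by
        have h1 : t - r < c / 2 := by linarith
        have h2 : α * d ≤ c / 2 := by
          have : α * d ≤ α₀ * d := by
            apply mul_le_mul_of_nonneg_right hα2 hd0
          refine this.trans ?_
          rw [hα₀def]
          rw [div_mul_eq_mul_div, div_le_iff₀ (by linarith : (0:ℝ) < d + 1)] at *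
          nlinarith
        linarith
      calc ψ α ≤ (((t - r) + α * d : ℝ) : EReal) := hbound
        _ < (c : EReal) := by exact_mod_cast harith
        _ < b := hcb
end

section
/- With ψ defined as ψ(α) = inf_x { F(x) − inf F + α·D(x) }, the limit ψ'(0) := lim_{α→0⁺} ψ(α)/α is finite if and only if there exists a minimizing sequence (x_k) with F(x_k) → inf F such that the sequence (D(x_k)) is bounded. -/
open Filter Set

/-- `ψ'(0) = lim_{α→0⁺} ψ(α)/α` is finite iff there is a minimizing sequence `(x_k)`
with `F(x_k) → inf F` and `(D(x_k))` bounded. -/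
theorem stmt_2 {V : Type*} [AddCommGroup V] [Module ℝ V]
    (F : V → EReal) (D : V → EReal) (x₀ : V) (m : ℝ)
    (hlb : ∀ x, (m : EReal) ≤ F x) (hx₀ : F x₀ < ⊤)
    (hD : ∀ x, 0 ≤ D x) (hD₀ : D x₀ = 0)
    (ψ : ℝ → EReal)
    (hψ : ∀ α : ℝ, ψ α = ⨅ x : V, (F x - (⨅ y : V, F y) + (α : EReal) * D x)) :
    (∃ L : ℝ, Tendsto (fun α : ℝ => ψ α * ((α⁻¹ : ℝ) : EReal))
        (nhdsWithin 0 (Set.Ioi 0)) (nhds (L : EReal))) ↔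
      ∃ x : ℕ → V,
        Tendsto (fun k => F (x k)) atTop (nhds (⨅ y : V, F y)) ∧
        ∃ M : ℝ, ∀ k, D (x k) ≤ (M : EReal) := by
  classical
  set I : EReal := ⨅ y : V, F y with hIdef
  have hIleF : ∀ x, I ≤ F x := fun x => iInf_le _ x
  have hItop : I ≠ ⊤ := ((hIleF x₀).trans_lt hx₀).ne
  have hIbot : I ≠ ⊥ := by
    intro h
    have : (m : EReal) ≤ I := le_iInf hlb
    simp [h] at this
  set r : ℝ := I.toReal with hrdef
  have hIr : I = (r : EReal) := (EReal.coe_toReal hItop hIbot).symm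
  have hsub : ∀ x, (0 : EReal) ≤ F x - I := by
    intro x
    rw [hIr, EReal.le_sub_iff_add_le (Or.inl (EReal.coe_ne_bot r))
      (Or.inl (EReal.coe_ne_top r)), zero_add, ← hIr]
    exact hIleF x
  have hterm : ∀ (α : ℝ), 0 ≤ α → ∀ x, (0 : EReal) ≤ F x - I + (α : EReal) * D x :=
    fun α hα x => add_nonneg (hsub x) (mul_nonneg (EReal.coe_nonneg.2 hα) (hD x))
  have hψnn : ∀ (α : ℝ), 0 ≤ α → (0 : EReal) ≤ ψ α := fun α hα => by
    rw [hψ]; exact le_iInf (hterm α hα)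
  have hψle : ∀ (α : ℝ) (x : V), ψ α ≤ F x - I + (α : EReal) * D x := fun α x => by
    rw [hψ]; exact iInf_le _ x
  -- cancel multiplication by a nonzero real
  have hcancel : ∀ (t : ℝ), t ≠ 0 → ∀ a : EReal, a * (t : EReal) * ((t⁻¹ : ℝ) : EReal) = a := by
    intro t ht a
    rw [mul_assoc, ← EReal.coe_mul, mul_inv_cancel₀ ht, EReal.coe_one, mul_one]
  have hcancel' : ∀ (t : ℝ), t ≠ 0 → ∀ a : EReal, a * ((t⁻¹ : ℝ) : EReal) * (t : EReal) = a := by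
    intro t ht a
    rw [mul_assoc, ← EReal.coe_mul, inv_mul_cancel₀ ht, EReal.coe_one, mul_one]
  have hmulle : ∀ (t : ℝ), 0 < t → ∀ a b : EReal, a * (t : EReal) ≤ b * (t : EReal) → a ≤ b := by
    intro t ht a b h
    have h2 := mul_le_mul_of_nonneg_right h
      (EReal.coe_nonneg.2 (inv_nonneg.2 ht.le) : (0 : EReal) ≤ ((t⁻¹ : ℝ) : EReal))
    rwa [hcancel t ht.ne' a, hcancel t ht.ne' b] at h2
  -- the function is antitone on (0, ∞)
  have hanti : AntitoneOn (fun α : ℝ => ψ α * ((α⁻¹ : ℝ) : EReal)) (Ioi (0 : ℝ)) := by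
    intro a ha b hb hab
    have ha0 : (0 : ℝ) < a := ha
    have hb0 : (0 : ℝ) < b := hb
    show ψ b * ((b⁻¹ : ℝ) : EReal) ≤ ψ a * ((a⁻¹ : ℝ) : EReal)
    have key : ψ b * ((a / b : ℝ) : EReal) ≤ ψ a := by
      rw [hψ a]
      refine le_iInf fun x => ?_
      have hone : (1 : EReal) ≤ ((b / a : ℝ) : EReal) := by
        rw [← EReal.coe_one, EReal.coe_le_coe_iff]
        exact (one_le_div ha0).2 hab
      have h1 : ψ b ≤ (F x - I + (a : EReal) * D x) * ((b / a : ℝ) : EReal) := by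
        calc ψ b ≤ F x - I + (b : EReal) * D x := hψle b x
          _ ≤ (F x - I) * ((b / a : ℝ) : EReal) + (b : EReal) * D x := by
              refine add_le_add ?_ le_rfl
              nth_rewrite 1 [← mul_one (F x - I)]
              exact mul_le_mul_of_nonneg_left hone (hsub x)
          _ = (F x - I + (a : EReal) * D x) * ((b / a : ℝ) : EReal) := by
              rw [EReal.right_distrib_of_nonneg (hsub x)
                (mul_nonneg (EReal.coe_nonneg.2 ha0.le) (hD x))]
              congr 1
              rw [mul_right_comm, ← EReal.coe_mul,
                show a * (b / a) = b by field_simp]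
      have h3 := mul_le_mul_of_nonneg_right h1
        (EReal.coe_nonneg.2 (div_nonneg ha0.le hb0.le) : (0 : EReal) ≤ ((a / b : ℝ) : EReal))
      rwa [mul_assoc, ← EReal.coe_mul, show (b / a) * (a / b) = (1 : ℝ) by field_simp,
        EReal.coe_one, mul_one] at h3
    have h4 := mul_le_mul_of_nonneg_right key
      (EReal.coe_nonneg.2 (inv_nonneg.2 ha0.le) : (0 : EReal) ≤ ((a⁻¹ : ℝ) : EReal))
    rwa [mul_assoc, ← EReal.coe_mul,
      show (a / b) * a⁻¹ = b⁻¹ by field_simp] at h4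
  have hbdd : BddAbove ((fun α : ℝ => ψ α * ((α⁻¹ : ℝ) : EReal)) '' Ioi 0) :=
    OrderTop.bddAbove _
  have htend := hanti.tendsto_nhdsGT hbdd
  constructor
  · rintro ⟨L, hL⟩
    have hgle : ∀ a : ℝ, 0 < a → ψ a * ((a⁻¹ : ℝ) : EReal) ≤ (L : EReal) := by
      intro a ha
      refine ge_of_tendsto hL ?_
      filter_upwards [Ioo_mem_nhdsGT_of_mem (left_mem_Ico.2 ha)] with b hb
      exact hanti hb.1 ha hb.2.le
    set M : ℝ := |L| + 1 with hM
    set α : ℕ → ℝ := fun k => ((k : ℝ) + 1)⁻¹ with hα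
    have hαpos : ∀ k, 0 < α k := fun k => by positivity
    have hk : ∀ k : ℕ, ∃ xk : V,
        F xk - I + ((α k : ℝ) : EReal) * D xk < ((M * α k : ℝ) : EReal) := by
      intro k
      have h1 : ψ (α k) ≤ ((L * α k : ℝ) : EReal) := by
        have h2 := mul_le_mul_of_nonneg_right (hgle (α k) (hαpos k))
          (EReal.coe_nonneg.2 (hαpos k).le : (0 : EReal) ≤ ((α k : ℝ) : EReal))
        rwa [hcancel' (α k) (hαpos k).ne' (ψ (α k)), ← EReal.coe_mul] at h2
      have h3 : ψ (α k) < ((M * α k : ℝ) : EReal) := by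
        refine h1.trans_lt (EReal.coe_lt_coe_iff.2 ?_)
        have : L < M := (le_abs_self L).trans_lt (lt_add_one _)
        exact mul_lt_mul_of_pos_right this (hαpos k)
      rw [hψ] at h3
      exact iInf_lt_iff.1 h3
    choose x hx using hk
    refine ⟨x, ?_, M, fun k => ?_⟩
    · -- F (x k) → I
      rw [hIr]
      have hub : ∀ k, F (x k) ≤ ((r + M * α k : ℝ) : EReal) := by
        intro k
        have h5 : F (x k) - I ≤ ((M * α k : ℝ) : EReal) := by
          refine le_trans ?_ (hx k).le
          exact le_add_of_nonneg_right (mul_nonneg (EReal.coe_nonneg.2 (hαpos k).le) (hD _))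
        rw [hIr] at h5
        rw [EReal.coe_add]
        rw [EReal.sub_le_iff_le_add (Or.inl (EReal.coe_ne_bot r))
          (Or.inl (EReal.coe_ne_top r))] at h5
        rwa [add_comm] at h5
      have hlow : ∀ k, ((r : ℝ) : EReal) ≤ F (x k) := fun k => hIr ▸ hIleF (x k)
      refine tendsto_of_tendsto_of_tendsto_of_le_of_le (g := fun _ => ((r : ℝ) : EReal))
        (h := fun k => ((r + M * α k : ℝ) : EReal)) tendsto_const_nhds ?_ hlow hub
      have hreal : Tendsto (fun k : ℕ => r + M * α k) atTop (nhds r) := by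
        have h6 : Tendsto (fun k : ℕ => α k) atTop (nhds 0) := by
          simpa [hα] using tendsto_one_div_add_atTop_nhds_zero_nat (𝕜 := ℝ)
        have := (h6.const_mul M).const_add r
        simpa using this
      exact (continuous_coe_real_ereal.tendsto r).comp hreal
    · -- D (x k) ≤ M
      have h7 : ((α k : ℝ) : EReal) * D (x k) ≤ ((M * α k : ℝ) : EReal) :=
        (le_add_of_nonneg_left (hsub (x k))).trans (hx k).le
      refine hmulle (α k) (hαpos k) _ _ ?_
      rw [mul_comm ((α k : ℝ) : EReal) (D (x k)), EReal.coe_mul] at h7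
      exact h7
  · rintro ⟨x, hxF, M, hxM⟩
    set M' : ℝ := max M 0 with hM'
    have hxM' : ∀ k, D (x k) ≤ (M' : EReal) := fun k =>
      (hxM k).trans (EReal.coe_le_coe_iff.2 (le_max_left _ _))
    have hrF : Tendsto (fun k => F (x k)) atTop (nhds ((r : ℝ) : EReal)) := hIr ▸ hxF
    have hgle : ∀ a : ℝ, 0 < a → ψ a * ((a⁻¹ : ℝ) : EReal) ≤ (M' : EReal) := by
      intro a ha
      have hψa : ψ a ≤ ((a * M' : ℝ) : EReal) := by
        rw [← EReal.le_of_forall_lt_iff_le]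
        intro z hz
        have hz' : a * M' < z := EReal.coe_lt_coe_iff.1 hz
        set ε : ℝ := z - a * M' with hε
        have hεpos : 0 < ε := sub_pos.2 hz'
        have hev : ∀ᶠ k in atTop, F (x k) < ((r + ε : ℝ) : EReal) :=
          hrF.eventually_lt_const (EReal.coe_lt_coe_iff.2 (lt_add_of_pos_right r hεpos))
        obtain ⟨k, hk⟩ := hev.exists
        have h5 : F (x k) - (r : EReal) < (ε : EReal) := by
          refine EReal.sub_lt_of_lt_add' ?_
          rwa [← EReal.coe_add]
        have h6 := hψle a (x k)
        rw [hIr] at h6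
        calc ψ a ≤ (F (x k) - (r : EReal)) + (a : EReal) * D (x k) := h6
          _ ≤ (ε : EReal) + (a : EReal) * (M' : EReal) :=
              add_le_add h5.le (mul_le_mul_of_nonneg_left (hxM' k) (EReal.coe_nonneg.2 ha.le))
          _ = ((ε + a * M' : ℝ) : EReal) := by rw [← EReal.coe_mul, ← EReal.coe_add]
          _ = (z : EReal) := by rw [hε]; norm_num
      have h8 := mul_le_mul_of_nonneg_right hψa
        (EReal.coe_nonneg.2 (inv_nonneg.2 ha.le) : (0 : EReal) ≤ ((a⁻¹ : ℝ) : EReal))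
      rwa [← EReal.coe_mul, show a * M' * a⁻¹ = M' by
        rw [mul_right_comm, mul_inv_cancel₀ ha.ne', one_mul]] at h8
    set S : EReal := sSup ((fun α : ℝ => ψ α * ((α⁻¹ : ℝ) : EReal)) '' Ioi 0) with hS
    have hSle : S ≤ (M' : EReal) := by
      refine sSup_le ?_
      rintro _ ⟨a, ha, rfl⟩
      exact hgle a ha
    have hS0 : (0 : EReal) ≤ S := by
      refine le_trans ?_ (le_sSup ⟨1, by simp, rfl⟩)
      exact mul_nonneg (hψnn 1 one_pos.le) (by norm_num)
    have hStop : S ≠ ⊤ := (hSle.trans_lt (EReal.coe_lt_top M')).ne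
    have hSbot : S ≠ ⊥ := ((show (⊥ : EReal) < 0 by simp).trans_le hS0).ne'
    refine ⟨S.toReal, ?_⟩
    rw [EReal.coe_toReal hStop hSbot]
    exact htend
end

section
/- If ψ'(0) := lim_{α→0⁺} ψ(α)/α is finite, then for any decreasing sequence α_k → 0 and any quasi-minimizers x_k satisfying F(x_k) − inf F + α_k D(x_k) ≤ ψ(α_k) + α_k², the sequence D(x_k) is bounded and F(x_k) → inf F. -/
open Filter Set

/-- If `ψ'(0) = lim_{α→0⁺} ψ(α)/α` is finite, then for any decreasing positive sequence
`α_k → 0` and quasi-minimizers `x_k` with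
`F(x_k) − inf F + α_k D(x_k) ≤ ψ(α_k) + α_k²`, the sequence `D(x_k)` is bounded
and `F(x_k) → inf F`. -/
theorem stmt_3 {V : Type*} [AddCommGroup V] [Module ℝ V]
    (F : V → EReal) (D : V → EReal) (x₀ : V) (m : ℝ)
    (hlb : ∀ x, (m : EReal) ≤ F x) (hx₀ : F x₀ < ⊤)
    (hD : ∀ x, 0 ≤ D x) (hD₀ : D x₀ = 0)
    (ψ : ℝ → EReal)
    (hψ : ∀ α : ℝ, ψ α = ⨅ x : V, (F x - (⨅ y : V, F y) + (α : EReal) * D x))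
    (L : ℝ)
    (hL : Tendsto (fun α : ℝ => ψ α * ((α⁻¹ : ℝ) : EReal))
      (nhdsWithin 0 (Set.Ioi 0)) (nhds (L : EReal)))
    (α : ℕ → ℝ) (hαpos : ∀ k, 0 < α k) (hαanti : StrictAnti α)
    (hα0 : Tendsto α atTop (nhds 0))
    (x : ℕ → V)
    (hx : ∀ k, F (x k) - (⨅ y : V, F y) + (α k : EReal) * D (x k)
      ≤ ψ (α k) + ((α k ^ 2 : ℝ) : EReal)) :
    (∃ M : ℝ, ∀ k, D (x k) ≤ (M : EReal)) ∧
      Tendsto (fun k => F (x k)) atTop (nhds (⨅ y : V, F y)) := by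
  set S := ⨅ y : V, F y with hSdef
  have hSlb : (m : EReal) ≤ S := le_iInf hlb
  have hSbot : S ≠ ⊥ := fun h => by
    rw [h, le_bot_iff] at hSlb; exact EReal.coe_ne_bot m hSlb
  have hStop : S ≠ ⊤ := (lt_of_le_of_lt (iInf_le _ x₀) hx₀).ne
  set s := S.toReal with hsdef
  have hSs : S = (s : EReal) := (EReal.coe_toReal hStop hSbot).symm
  -- ψ is nonnegative for nonnegative α
  have hψ0 : ∀ a : ℝ, 0 ≤ a → 0 ≤ ψ a := by
    intro a ha
    rw [hψ]
    refine le_iInf fun y => ?_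
    have h1 : (0 : EReal) ≤ F y - S := by
      rw [EReal.le_sub_iff_add_le (Or.inl hSbot) (Or.inl hStop), zero_add]
      exact iInf_le _ y
    have h2 : (0 : EReal) ≤ (a : EReal) * D y :=
      mul_nonneg (by exact_mod_cast ha) (hD y)
    calc (0 : EReal) = 0 + 0 := by simp
    _ ≤ (F y - S) + (a : EReal) * D y := add_le_add h1 h2
  -- ψ is bounded above by F x₀ - S < ⊤
  have hψub : ∀ a : ℝ, ψ a ≤ F x₀ - S := by
    intro a
    rw [hψ]
    refine iInf_le_of_le x₀ ?_
    rw [hD₀, mul_zero, add_zero]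
  have hψtop : ∀ a : ℝ, ψ a ≠ ⊤ := by
    intro a
    have hF0bot : F x₀ ≠ ⊥ := fun h => by
      have := hlb x₀; rw [h, le_bot_iff] at this; exact EReal.coe_ne_bot m this
    refine (lt_of_le_of_lt (hψub a) ?_).ne
    rw [hSs, ← EReal.coe_toReal hx₀.ne hF0bot, ← EReal.coe_sub]
    exact EReal.coe_lt_top _
  set p : ℕ → ℝ := fun k => (ψ (α k)).toReal with hpdef
  have hpco : ∀ k, ψ (α k) = ((p k : ℝ) : EReal) := fun k =>
    (EReal.coe_toReal (hψtop _) (fun h => by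
      have := hψ0 (α k) (hαpos k).le
      rw [h] at this
      exact absurd (this.trans_lt EReal.bot_lt_zero) (lt_irrefl _))).symm
  have hp0 : ∀ k, 0 ≤ p k := by
    intro k
    have := hψ0 (α k) (hαpos k).le
    rw [hpco k] at this
    exact_mod_cast this
  -- finiteness of F (x k) and D (x k)
  have hRHS : ∀ k, ψ (α k) + ((α k ^ 2 : ℝ) : EReal) < ⊤ := fun k =>
    EReal.add_lt_top (hψtop _) (EReal.coe_ne_top _)
  have hA0 : ∀ k, (0 : EReal) ≤ F (x k) - S := by
    intro k
    rw [EReal.le_sub_iff_add_le (Or.inl hSbot) (Or.inl hStop), zero_add]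
    exact iInf_le _ (x k)
  have hB0 : ∀ k, (0 : EReal) ≤ (α k : EReal) * D (x k) := fun k =>
    mul_nonneg (by exact_mod_cast (hαpos k).le) (hD _)
  have hAtop : ∀ k, F (x k) - S ≠ ⊤ := by
    intro k
    refine (lt_of_le_of_lt (le_trans ?_ (hx k)) (hRHS k)).ne
    exact le_add_of_nonneg_right (hB0 k)
  have hBtop : ∀ k, (α k : EReal) * D (x k) ≠ ⊤ := by
    intro k
    refine (lt_of_le_of_lt (le_trans ?_ (hx k)) (hRHS k)).ne
    exact le_add_of_nonneg_left (hA0 k)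
  have hFtop : ∀ k, F (x k) ≠ ⊤ := by
    intro k h
    apply hAtop k
    rw [h, hSs, EReal.top_sub_coe]
  have hFbot : ∀ k, F (x k) ≠ ⊥ := fun k h => by
    have := hlb (x k); rw [h, le_bot_iff] at this; exact EReal.coe_ne_bot m this
  have hDtop : ∀ k, D (x k) ≠ ⊤ := by
    intro k h
    apply hBtop k
    rw [h, EReal.mul_top_of_pos (by exact_mod_cast hαpos k)]
  have hDbot : ∀ k, D (x k) ≠ ⊥ := fun k h => by
    have := hD (x k); rw [h, le_bot_iff] at this
    exact absurd this.symm EReal.bot_lt_zero.ne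
  set f : ℕ → ℝ := fun k => (F (x k)).toReal with hfdef
  set d : ℕ → ℝ := fun k => (D (x k)).toReal with hddef
  have hFco : ∀ k, F (x k) = ((f k : ℝ) : EReal) := fun k =>
    (EReal.coe_toReal (hFtop k) (hFbot k)).symm
  have hDco : ∀ k, D (x k) = ((d k : ℝ) : EReal) := fun k =>
    (EReal.coe_toReal (hDtop k) (hDbot k)).symm
  have hd0 : ∀ k, 0 ≤ d k := by
    intro k
    have := hD (x k); rw [hDco k] at this; exact_mod_cast this
  have hsf : ∀ k, s ≤ f k := by
    intro k
    have : S ≤ F (x k) := iInf_le _ (x k)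
    rw [hSs, hFco k] at this; exact_mod_cast this
  -- the key real inequality
  have hreal : ∀ k, (f k - s) + α k * d k ≤ p k + α k ^ 2 := by
    intro k
    have h := hx k
    rw [hSs, hFco k, hDco k, hpco k,
      ← EReal.coe_sub, ← EReal.coe_mul, ← EReal.coe_add, ← EReal.coe_add] at h
    exact_mod_cast h
  -- part 1 : boundedness of D (x k)
  have hαW : Tendsto α atTop (nhdsWithin 0 (Set.Ioi 0)) :=
    tendsto_nhdsWithin_of_tendsto_nhds_of_eventually_within α hα0
      (Eventually.of_forall fun k => hαpos k)
  have hcomp : Tendsto (fun k => ψ (α k) * (((α k)⁻¹ : ℝ) : EReal)) atTop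
      (nhds (L : EReal)) := hL.comp hαW
  have hq : Tendsto (fun k => p k / α k) atTop (nhds L) := by
    have h1 := (EReal.tendsto_toReal (EReal.coe_ne_top L) (EReal.coe_ne_bot L)).comp hcomp
    have h2 : (fun k => (ψ (α k) * (((α k)⁻¹ : ℝ) : EReal)).toReal)
        = fun k => p k / α k := by
      funext k
      rw [EReal.toReal_mul, EReal.toReal_coe, div_eq_mul_inv]
    rw [EReal.toReal_coe] at h1
    exact h2 ▸ h1
  have hg : Tendsto (fun k => p k / α k + α k) atTop (nhds L) := by
    have := hq.add hα0
    rwa [add_zero] at this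
  obtain ⟨M, hM⟩ := hg.bddAbove_range
  have hdM : ∀ k, d k ≤ M := by
    intro k
    have h1 : α k * d k ≤ p k + α k ^ 2 := by
      have := hreal k; have := hsf k; linarith
    have h2 : d k ≤ p k / α k + α k := by
      rw [← le_div_iff₀' (hαpos k)] at h1
      have : (p k + α k ^ 2) / α k = p k / α k + α k := by
        rw [add_div, pow_two, mul_div_assoc, div_self (hαpos k).ne', mul_one]
      linarith [this ▸ h1]
    exact le_trans h2 (hM (Set.mem_range_self k))
  refine ⟨⟨M, fun k => ?_⟩, ?_⟩
  · rw [hDco k]; exact_mod_cast hdM k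
  -- part 2 : F (x k) → inf F
  have hpz : Tendsto p atTop (nhds 0) := by
    have h1 := hq.mul hα0
    rw [mul_zero] at h1
    have h2 : (fun k => p k / α k * α k) = p := by
      funext k; exact div_mul_cancel₀ (p k) (hαpos k).ne'
    rwa [h2] at h1
  have hfub : ∀ k, f k ≤ s + p k + α k ^ 2 := by
    intro k
    have h1 := hreal k
    have h2 : 0 ≤ α k * d k := mul_nonneg (hαpos k).le (hd0 k)
    linarith
  have hub : Tendsto (fun k => s + p k + α k ^ 2) atTop (nhds s) := by
    have := (tendsto_const_nhds (x := s)).add hpz |>.add ((hα0.pow 2))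
    simpa using this
  have hfs : Tendsto f atTop (nhds s) :=
    tendsto_of_tendsto_of_tendsto_of_le_of_le tendsto_const_nhds hub hsf hfub
  have : Tendsto (fun k => ((f k : ℝ) : EReal)) atTop (nhds ((s : ℝ) : EReal)) :=
    (EReal.continuous_coe_iff.mpr continuous_id).continuousAt.tendsto.comp hfs
  rw [hSs]
  exact this.congr fun k => (hFco k).symm
end

section
/- Let τ be a probability measure, β > 0, and η_hyp(s) = s·arcsinh(s/β) − √(s² + β²) + β. For f, g ∈ L¹(τ) with L¹-norms at most K, the Bregman divergence D_{η̄_hyp}(f,g) satisfies D_{η̄_hyp}(f,g) ≥ (1/(2(K+β))) ‖f − g‖²_{L¹(τ)}. -/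
open MeasureTheory Real


section aux
variable {β : ℝ}

noncomputable def Gf (β b x : ℝ) : ℝ :=
  (x * Real.arsinh (x / β) - Real.sqrt (x ^ 2 + β ^ 2) + β)
    - Real.arsinh (b / β) * (x - b)
    - 3 * (x - b) ^ 2 / (2 * (Real.sqrt (x ^ 2 + β ^ 2) + 2 * Real.sqrt (b ^ 2 + β ^ 2)))

noncomputable def Pf (β b x : ℝ) : ℝ :=
  Real.arsinh (x / β) - Real.arsinh (b / β)
    - (3 * (x - b) * Real.sqrt (x ^ 2 + β ^ 2)
        * (Real.sqrt (x ^ 2 + β ^ 2) + 2 * Real.sqrt (b ^ 2 + β ^ 2))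
        - 3 / 2 * (x - b) ^ 2 * x)
      / (Real.sqrt (x ^ 2 + β ^ 2)
          * (Real.sqrt (x ^ 2 + β ^ 2) + 2 * Real.sqrt (b ^ 2 + β ^ 2)) ^ 2)

noncomputable def Qf (β b x : ℝ) : ℝ :=
  (Real.sqrt (x ^ 2 + β ^ 2) ^ 2
      * (Real.sqrt (x ^ 2 + β ^ 2) + 2 * Real.sqrt (b ^ 2 + β ^ 2)) ^ 3
    - 3 * Real.sqrt (x ^ 2 + β ^ 2) ^ 3
      * (Real.sqrt (x ^ 2 + β ^ 2) + 2 * Real.sqrt (b ^ 2 + β ^ 2)) ^ 2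
    + 6 * (x - b) * x * Real.sqrt (x ^ 2 + β ^ 2) ^ 2
      * (Real.sqrt (x ^ 2 + β ^ 2) + 2 * Real.sqrt (b ^ 2 + β ^ 2))
    + 3 / 2 * (x - b) ^ 2 * (Real.sqrt (x ^ 2 + β ^ 2) ^ 2 - x ^ 2)
      * (Real.sqrt (x ^ 2 + β ^ 2) + 2 * Real.sqrt (b ^ 2 + β ^ 2))
    - 3 * (x - b) ^ 2 * x ^ 2 * Real.sqrt (x ^ 2 + β ^ 2))
  / (Real.sqrt (x ^ 2 + β ^ 2) ^ 3
      * (Real.sqrt (x ^ 2 + β ^ 2) + 2 * Real.sqrt (b ^ 2 + β ^ 2)) ^ 3)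

lemma sqrt_sq_add_sq_pos (hβ : 0 < β) (a : ℝ) : 0 < Real.sqrt (a ^ 2 + β ^ 2) :=
  Real.sqrt_pos.mpr (by positivity)

lemma beta_mul_sqrt (hβ : 0 < β) (a : ℝ) :
    β * Real.sqrt (1 + (a / β) ^ 2) = Real.sqrt (a ^ 2 + β ^ 2) := by
  have h : a ^ 2 + β ^ 2 = β ^ 2 * (1 + (a / β) ^ 2) := by
    field_simp
    ring
  rw [h, Real.sqrt_mul (by positivity), Real.sqrt_sq hβ.le]

lemma hasDerivAt_sqrt_sq_add_sq (hβ : 0 < β) (a : ℝ) :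
    HasDerivAt (fun x : ℝ => Real.sqrt (x ^ 2 + β ^ 2))
      (a / Real.sqrt (a ^ 2 + β ^ 2)) a := by
  have h1 : HasDerivAt (fun x : ℝ => x ^ 2 + β ^ 2) (2 * a) a := by
    simpa using (hasDerivAt_pow 2 a).add_const (β ^ 2)
  have h2 := (Real.hasDerivAt_sqrt (show a ^ 2 + β ^ 2 ≠ 0 by positivity)).comp a h1
  refine (h2).congr_deriv ?_; symm
  have := (sqrt_sq_add_sq_pos hβ a).ne'
  field_simp

lemma hasDerivAt_arsinh_div (hβ : 0 < β) (a : ℝ) :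
    HasDerivAt (fun x : ℝ => Real.arsinh (x / β))
      (1 / Real.sqrt (a ^ 2 + β ^ 2)) a := by
  have h1 : HasDerivAt (fun x : ℝ => x / β) (1 / β) a := by
    simpa using (hasDerivAt_id a).div_const β
  have h2 := (Real.hasDerivAt_arsinh (a / β)).comp a h1
  refine (h2).congr_deriv ?_; symm
  rw [← beta_mul_sqrt hβ a]
  have h3 : Real.sqrt (1 + (a / β) ^ 2) ≠ 0 := by positivity
  field_simp

lemma hasDerivAt_eta (hβ : 0 < β) (a : ℝ) :
    HasDerivAt (fun x : ℝ => x * Real.arsinh (x / β) - Real.sqrt (x ^ 2 + β ^ 2) + β)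
      (Real.arsinh (a / β)) a := by
  have h1 := ((hasDerivAt_id a).mul (hasDerivAt_arsinh_div hβ a)).sub
      (hasDerivAt_sqrt_sq_add_sq hβ a)
  have h2 := h1.add_const β
  refine (h2).congr_deriv ?_; symm
  have := (sqrt_sq_add_sq_pos hβ a).ne'
  simp only [id_eq]
  field_simp
  ring

lemma hasDerivAt_Gf (hβ : 0 < β) (b x : ℝ) :
    HasDerivAt (Gf β b) (Pf β b x) x := by
  set t := Real.sqrt (b ^ 2 + β ^ 2) with ht_def
  have ht : 0 < t := sqrt_sq_add_sq_pos hβ b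
  have hs : 0 < Real.sqrt (x ^ 2 + β ^ 2) := sqrt_sq_add_sq_pos hβ x
  set s := Real.sqrt (x ^ 2 + β ^ 2) with hs_def
  have h1 := hasDerivAt_eta hβ x
  have h2 : HasDerivAt (fun y : ℝ => Real.arsinh (b / β) * (y - b))
      (Real.arsinh (b / β)) x := by
    simpa using ((hasDerivAt_id x).sub_const b).const_mul (Real.arsinh (b / β))
  have hsd := hasDerivAt_sqrt_sq_add_sq hβ x
  have hnum : HasDerivAt (fun y : ℝ => 3 * (y - b) ^ 2) (3 * (2 * (x - b))) x := by
    have := (((hasDerivAt_id x).sub_const b).pow 2).const_mul 3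
    simpa using this
  have hden : HasDerivAt (fun y : ℝ => 2 * (Real.sqrt (y ^ 2 + β ^ 2) + 2 * t))
      (2 * (x / s)) x := by
    simpa using (hsd.add_const (2 * t)).const_mul 2
  have hdne : 2 * (s + 2 * t) ≠ 0 := by positivity
  have h3 := hnum.div hden hdne
  have htotal := (h1.sub h2).sub h3
  refine (htotal).congr_deriv ?_; symm
  unfold Pf
  rw [← hs_def, ← ht_def]
  have hσ : s + 2 * t ≠ 0 := by positivity
  field_simp

lemma hasDerivAt_Pf (hβ : 0 < β) (b x : ℝ) :
    HasDerivAt (Pf β b) (Qf β b x) x := by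
  set t := Real.sqrt (b ^ 2 + β ^ 2) with ht_def
  have ht : 0 < t := sqrt_sq_add_sq_pos hβ b
  have hs : 0 < Real.sqrt (x ^ 2 + β ^ 2) := sqrt_sq_add_sq_pos hβ x
  set s := Real.sqrt (x ^ 2 + β ^ 2) with hs_def
  have harc := hasDerivAt_arsinh_div hβ x
  have hsd := hasDerivAt_sqrt_sq_add_sq hβ x
  have hN : HasDerivAt
      (fun y : ℝ => 3 * (y - b) * Real.sqrt (y ^ 2 + β ^ 2)
        * (Real.sqrt (y ^ 2 + β ^ 2) + 2 * t) - 3 / 2 * (y - b) ^ 2 * y)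
      ((3 * (x - b) * (x / s) + 3 * s) * (s + 2 * t)
        + 3 * (x - b) * s * (x / s)
        - (3 / 2 * (2 * (x - b)) * x + 3 / 2 * (x - b) ^ 2)) x := by
    have ha : HasDerivAt (fun y : ℝ => 3 * (y - b)) 3 x := by
      simpa using ((hasDerivAt_id x).sub_const b).const_mul 3
    have hb1 := (ha.mul hsd).mul (hsd.add_const (2 * t))
    have hc : HasDerivAt (fun y : ℝ => 3 / 2 * (y - b) ^ 2) (3 / 2 * (2 * (x - b))) x := by
      simpa using (((hasDerivAt_id x).sub_const b).pow 2).const_mul (3 / 2)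
    have hd := hc.mul (hasDerivAt_id x)
    refine (hb1.sub hd).congr_deriv ?_; symm
    simp only [Pi.mul_apply, id_eq, ← hs_def]
    ring
  have hM : HasDerivAt
      (fun y : ℝ => Real.sqrt (y ^ 2 + β ^ 2) * (Real.sqrt (y ^ 2 + β ^ 2) + 2 * t) ^ 2)
      ((x / s) * (s + 2 * t) ^ 2 + s * (2 * (s + 2 * t) * (x / s))) x := by
    have := hsd.mul ((hsd.add_const (2 * t)).pow 2)
    refine (this).congr_deriv ?_; symm
    simp only [Pi.pow_apply, Nat.cast_ofNat, ← hs_def]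
    ring
  have hMne : s * (s + 2 * t) ^ 2 ≠ 0 := by positivity
  have hQ := hN.div hM hMne
  have htot := (harc.sub_const (Real.arsinh (b / β))).sub hQ
  refine (htot).congr_deriv ?_; symm
  unfold Qf
  rw [← hs_def, ← ht_def]
  have hσ : s + 2 * t ≠ 0 := by positivity
  field_simp
  ring

lemma Qf_nonneg (hβ : 0 < β) (b x : ℝ) : 0 ≤ Qf β b x := by
  set t := Real.sqrt (b ^ 2 + β ^ 2) with ht_def
  have ht : 0 < t := sqrt_sq_add_sq_pos hβ b
  have hs : 0 < Real.sqrt (x ^ 2 + β ^ 2) := sqrt_sq_add_sq_pos hβ x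
  set s := Real.sqrt (x ^ 2 + β ^ 2) with hs_def
  have hs2 : s ^ 2 = x ^ 2 + β ^ 2 := Real.sq_sqrt (by positivity)
  have ht2 : t ^ 2 = b ^ 2 + β ^ 2 := Real.sq_sqrt (by positivity)
  unfold Qf
  rw [← hs_def, ← ht_def]
  apply div_nonneg _ (by positivity)
  -- key facts
  have hub : x * b + β ^ 2 ≤ s * t := by
    nlinarith [mul_pos hs ht, sq_nonneg (x - b), sq_nonneg (s * t - (x * b + β ^ 2)),
      sq_nonneg (s * t + (x * b + β ^ 2))]
  have hlb : -(s * t) ≤ x * b + β ^ 2 := by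
    nlinarith [mul_pos hs ht, sq_nonneg (x - b), sq_nonneg (s * t - (x * b + β ^ 2)),
      sq_nonneg (s * t + (x * b + β ^ 2))]
  have hX : s * (s + 2 * t) - (x - b) * x = β ^ 2 + 2 * (s * t) + x * b := by
    nlinarith [hs2]
  have h27 : 27 * (s * (t * t)) ≤ (s + 2 * t) ^ 3 := by
    nlinarith [mul_nonneg (mul_nonneg hs.le (sq_nonneg (s - t))) (by positivity : (0:ℝ) ≤ s + 8 * t)]
  have h3X : 3 * (β ^ 2 + 2 * (s * t) + x * b) ^ 2 ≤ s * (s + 2 * t) ^ 3 := by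
    have hX3 : β ^ 2 + 2 * (s * t) + x * b ≤ 3 * (s * t) := by nlinarith
    have hX0 : 0 ≤ β ^ 2 + 2 * (s * t) + x * b := by nlinarith [mul_pos hs ht]
    have hsq : (β ^ 2 + 2 * (s * t) + x * b) ^ 2 ≤ 9 * (s * t) ^ 2 := by nlinarith [mul_pos hs ht]
    nlinarith [mul_le_mul_of_nonneg_left h27 hs.le]
  have hid : s ^ 2 * (s + 2 * t) ^ 3 - 3 * s ^ 3 * (s + 2 * t) ^ 2
      + 6 * (x - b) * x * s ^ 2 * (s + 2 * t)
      + 3 / 2 * (x - b) ^ 2 * (s ^ 2 - x ^ 2) * (s + 2 * t)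
      - 3 * (x - b) ^ 2 * x ^ 2 * s
      = s * (s * (s + 2 * t) ^ 3 - 3 * (s * (s + 2 * t) - (x - b) * x) ^ 2)
        + 3 / 2 * (x - b) ^ 2 * (s ^ 2 - x ^ 2) * (s + 2 * t) := by ring
  have h1 : 0 ≤ s * (s * (s + 2 * t) ^ 3 - 3 * (s * (s + 2 * t) - (x - b) * x) ^ 2) := by
    apply mul_nonneg hs.le
    rw [hX]
    linarith [h3X]
  have h2 : 0 ≤ 3 / 2 * (x - b) ^ 2 * (s ^ 2 - x ^ 2) * (s + 2 * t) := by
    have hβ2 : s ^ 2 - x ^ 2 = β ^ 2 := by linarith [hs2]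
    rw [hβ2]
    positivity
  rw [hid]
  linarith [h1, h2]


lemma key_pointwise (hβ : 0 < β) (b a : ℝ) :
    3 * (a - b) ^ 2 / (2 * (Real.sqrt (a ^ 2 + β ^ 2) + 2 * Real.sqrt (b ^ 2 + β ^ 2))) ≤
      (a * Real.arsinh (a / β) - Real.sqrt (a ^ 2 + β ^ 2) + β)
        - (b * Real.arsinh (b / β) - Real.sqrt (b ^ 2 + β ^ 2) + β)
        - Real.arsinh (b / β) * (a - b) := by
  have hmono : Monotone (Pf β b) :=
    monotone_of_hasDerivAt_nonneg (hasDerivAt_Pf hβ b) (fun x => Qf_nonneg hβ b x)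
  have hPb : Pf β b b = 0 := by
    unfold Pf
    simp
  have hGb : Gf β b b = b * Real.arsinh (b / β) - Real.sqrt (b ^ 2 + β ^ 2) + β := by
    unfold Gf
    simp
  have hmain : Gf β b b ≤ Gf β b a := by
    rcases le_total b a with h | h
    · have hm : MonotoneOn (Gf β b) (Set.Ici b) := by
        apply monotoneOn_of_deriv_nonneg (convex_Ici b)
        · exact fun x _ => (hasDerivAt_Gf hβ b x).continuousAt.continuousWithinAt
        · exact fun x _ => (hasDerivAt_Gf hβ b x).differentiableAt.differentiableWithinAt
        · intro x hx
          rw [(hasDerivAt_Gf hβ b x).deriv]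
          rw [interior_Ici] at hx
          calc (0:ℝ) = Pf β b b := hPb.symm
            _ ≤ Pf β b x := hmono (le_of_lt hx)
      exact hm Set.self_mem_Ici h h
    · have hm : AntitoneOn (Gf β b) (Set.Iic b) := by
        apply antitoneOn_of_deriv_nonpos (convex_Iic b)
        · exact fun x _ => (hasDerivAt_Gf hβ b x).continuousAt.continuousWithinAt
        · exact fun x _ => (hasDerivAt_Gf hβ b x).differentiableAt.differentiableWithinAt
        · intro x hx
          rw [(hasDerivAt_Gf hβ b x).deriv]
          rw [interior_Iic] at hx
          calc Pf β b x ≤ Pf β b b := hmono (le_of_lt hx)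
            _ = 0 := hPb
      exact hm h Set.self_mem_Iic h
  rw [hGb] at hmain
  unfold Gf at hmain
  linarith



end aux

/-- Strong convexity of the Bregman divergence of the hyperbolic entropy
`η_hyp(s) = s·arcsinh(s/β) − √(s²+β²) + β` over an `L¹`-ball of radius `K`. -/
theorem stmt_5 {Ω : Type*} [MeasurableSpace Ω] (τ : Measure Ω) [IsProbabilityMeasure τ]
    (β K : ℝ) (hβ : 0 < β) (hK : 0 < K)
    (f g : Ω → ℝ) (hf : Integrable f τ) (hg : Integrable g τ)
    (hηf : Integrable (fun ω => f ω * Real.arsinh (f ω / β)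
      - Real.sqrt ((f ω) ^ 2 + β ^ 2) + β) τ)
    (hηg : Integrable (fun ω => g ω * Real.arsinh (g ω / β)
      - Real.sqrt ((g ω) ^ 2 + β ^ 2) + β) τ)
    (hcross : Integrable (fun ω => Real.arsinh (g ω / β) * (f ω - g ω)) τ)
    (hfK : ∫ ω, |f ω| ∂τ ≤ K) (hgK : ∫ ω, |g ω| ∂τ ≤ K) :
    1 / (2 * (K + β)) * (∫ ω, |f ω - g ω| ∂τ) ^ 2 ≤
      ∫ ω, ((f ω * Real.arsinh (f ω / β) - Real.sqrt ((f ω) ^ 2 + β ^ 2) + β)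
        - (g ω * Real.arsinh (g ω / β) - Real.sqrt ((g ω) ^ 2 + β ^ 2) + β)
        - Real.arsinh (g ω / β) * (f ω - g ω)) ∂τ := by
  classical
  set B : Ω → ℝ := fun ω =>
    (f ω * Real.arsinh (f ω / β) - Real.sqrt ((f ω) ^ 2 + β ^ 2) + β)
      - (g ω * Real.arsinh (g ω / β) - Real.sqrt ((g ω) ^ 2 + β ^ 2) + β)
      - Real.arsinh (g ω / β) * (f ω - g ω) with hB_def
  have hB : Integrable B τ := (hηf.sub hηg).sub hcross
  set s : Ω → ℝ := fun ω => Real.sqrt ((f ω) ^ 2 + β ^ 2) with hs_def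
  set t : Ω → ℝ := fun ω => Real.sqrt ((g ω) ^ 2 + β ^ 2) with ht_def
  set w : Ω → ℝ := fun ω => 2 / 3 * (s ω + 2 * t ω) with hw_def
  have hs_pos : ∀ ω, 0 < s ω := fun ω => sqrt_sq_add_sq_pos hβ (f ω)
  have ht_pos : ∀ ω, 0 < t ω := fun ω => sqrt_sq_add_sq_pos hβ (g ω)
  have hw_pos : ∀ ω, 0 < w ω := fun ω => by
    have := hs_pos ω; have := ht_pos ω
    simp only [hw_def]; positivity
  set u : Ω → ℝ := fun ω => |f ω - g ω| / Real.sqrt (w ω) with hu_def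
  set v : Ω → ℝ := fun ω => Real.sqrt (w ω) with hv_def
  -- pointwise facts
  have hu_sq : ∀ ω, u ω ^ 2 = (f ω - g ω) ^ 2 / w ω := fun ω => by
    simp only [hu_def, div_pow, sq_abs, Real.sq_sqrt (hw_pos ω).le]
  have huv : ∀ ω, u ω * v ω = |f ω - g ω| := fun ω => by
    have : Real.sqrt (w ω) ≠ 0 := by
      have := hw_pos ω; positivity
    simp only [hu_def, hv_def]
    field_simp
  have hkey : ∀ ω, u ω ^ 2 ≤ B ω := fun ω => by
    rw [hu_sq ω]
    have h := key_pointwise hβ (g ω) (f ω)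
    have heq : (f ω - g ω) ^ 2 / w ω
        = 3 * (f ω - g ω) ^ 2 / (2 * (s ω + 2 * t ω)) := by
      have h1 : 0 < s ω + 2 * t ω := by have := hs_pos ω; have := ht_pos ω; linarith
      rw [hw_def]
      field_simp
    rw [heq]
    exact h
  have hu2_nonneg : ∀ ω, (0:ℝ) ≤ u ω ^ 2 := fun ω => sq_nonneg _
  -- measurability
  have hs_m : AEStronglyMeasurable s τ :=
    (Real.continuous_sqrt.comp ((continuous_pow 2).add continuous_const)).comp_aestronglyMeasurable hf.1
  have ht_m : AEStronglyMeasurable t τ :=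
    (Real.continuous_sqrt.comp ((continuous_pow 2).add continuous_const)).comp_aestronglyMeasurable hg.1
  have hw_m : AEStronglyMeasurable w τ := ((hs_m.add (ht_m.const_mul 2)).const_mul (2/3))
  have hv_m : AEStronglyMeasurable v τ :=
    Real.continuous_sqrt.comp_aestronglyMeasurable hw_m
  have hu_m : AEStronglyMeasurable u τ :=
    (((hf.sub hg).abs.aestronglyMeasurable.aemeasurable).div
      hv_m.aemeasurable).aestronglyMeasurable
  -- integrability of s and t
  have hsqrt_le : ∀ x : ℝ, Real.sqrt (x ^ 2 + β ^ 2) ≤ |x| + β := fun x => by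
    rw [show |x| + β = Real.sqrt ((|x| + β) ^ 2) from
      (Real.sqrt_sq (by positivity)).symm]
    apply Real.sqrt_le_sqrt
    nlinarith [abs_nonneg x, sq_abs x]
  have hs_int : Integrable s τ := by
    apply Integrable.mono' (hf.abs.add (integrable_const β)) hs_m
    filter_upwards with ω
    rw [Real.norm_of_nonneg (hs_pos ω).le]
    exact hsqrt_le (f ω)
  have ht_int : Integrable t τ := by
    apply Integrable.mono' (hg.abs.add (integrable_const β)) ht_m
    filter_upwards with ω
    rw [Real.norm_of_nonneg (ht_pos ω).le]
    exact hsqrt_le (g ω)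
  have hw_int : Integrable w τ := ((hs_int.add (ht_int.const_mul 2)).const_mul (2/3))
  have hu2_int : Integrable (fun ω => u ω ^ 2) τ := by
    apply Integrable.mono' hB (hu_m.pow 2)
    filter_upwards with ω
    simp only [Pi.pow_apply]
    rw [Real.norm_of_nonneg (hu2_nonneg ω)]
    exact hkey ω
  have hv2_int : Integrable (fun ω => v ω ^ 2) τ := by
    have : (fun ω => v ω ^ 2) = w := by
      funext ω
      simp only [hv_def, Real.sq_sqrt (hw_pos ω).le]
    rw [this]; exact hw_int
  -- integral bounds
  have hs_le : ∫ ω, s ω ∂τ ≤ K + β := by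
    have h1 : ∫ ω, s ω ∂τ ≤ ∫ ω, (|f ω| + β) ∂τ :=
      integral_mono hs_int (hf.abs.add (integrable_const β)) (fun ω => hsqrt_le (f ω))
    have h2 : ∫ ω, (|f ω| + β) ∂τ = (∫ ω, |f ω| ∂τ) + β := by
      rw [integral_add hf.abs (integrable_const β), integral_const]
      simp
    linarith
  have ht_le : ∫ ω, t ω ∂τ ≤ K + β := by
    have h1 : ∫ ω, t ω ∂τ ≤ ∫ ω, (|g ω| + β) ∂τ :=
      integral_mono ht_int (hg.abs.add (integrable_const β)) (fun ω => hsqrt_le (g ω))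
    have h2 : ∫ ω, (|g ω| + β) ∂τ = (∫ ω, |g ω| ∂τ) + β := by
      rw [integral_add hg.abs (integrable_const β), integral_const]
      simp
    linarith
  have hv2_le : ∫ ω, v ω ^ 2 ∂τ ≤ 2 * (K + β) := by
    have h0 : ∫ ω, v ω ^ 2 ∂τ = ∫ ω, w ω ∂τ := by
      apply integral_congr_ae
      filter_upwards with ω
      simp only [hv_def, Real.sq_sqrt (hw_pos ω).le]
    have h1 : ∫ ω, w ω ∂τ = 2 / 3 * ((∫ ω, s ω ∂τ) + 2 * ∫ ω, t ω ∂τ) := by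
      simp only [hw_def]
      rw [integral_const_mul, integral_add hs_int (ht_int.const_mul 2), integral_const_mul]
    rw [h0, h1]
    linarith
  have hu2_le : ∫ ω, u ω ^ 2 ∂τ ≤ ∫ ω, B ω ∂τ := integral_mono hu2_int hB hkey
  -- Cauchy-Schwarz
  have hpq : Real.HolderConjugate 2 2 := Real.HolderConjugate.two_two
  have hofReal : ENNReal.ofReal (2:ℝ) = 2 := by norm_num
  have hu_mem : MemLp u (ENNReal.ofReal (2:ℝ)) τ := by
    rw [hofReal]
    exact (memLp_two_iff_integrable_sq hu_m).mpr hu2_int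
  have hv_mem : MemLp v (ENNReal.ofReal (2:ℝ)) τ := by
    rw [hofReal]
    exact (memLp_two_iff_integrable_sq hv_m).mpr hv2_int
  have hCS := integral_mul_le_Lp_mul_Lq_of_nonneg hpq
    (Filter.Eventually.of_forall fun ω => by positivity)
    (Filter.Eventually.of_forall fun ω => Real.sqrt_nonneg _) hu_mem hv_mem
  have hrpow_u : ∫ ω, u ω ^ (2:ℝ) ∂τ = ∫ ω, u ω ^ 2 ∂τ := by
    apply integral_congr_ae
    filter_upwards with ω
    rw [show ((2:ℝ) = ((2:ℕ):ℝ)) by norm_num, Real.rpow_natCast]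
  have hrpow_v : ∫ ω, v ω ^ (2:ℝ) ∂τ = ∫ ω, v ω ^ 2 ∂τ := by
    apply integral_congr_ae
    filter_upwards with ω
    rw [show ((2:ℝ) = ((2:ℕ):ℝ)) by norm_num, Real.rpow_natCast]
  have huv_int : ∫ ω, u ω * v ω ∂τ = ∫ ω, |f ω - g ω| ∂τ := by
    apply integral_congr_ae
    filter_upwards with ω
    rw [huv ω]
  rw [huv_int, hrpow_u, hrpow_v] at hCS
  set A := ∫ ω, u ω ^ 2 ∂τ with hA_def
  set V := ∫ ω, v ω ^ 2 ∂τ with hV_def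
  have hA0 : 0 ≤ A := integral_nonneg hu2_nonneg
  have hV0 : 0 ≤ V := integral_nonneg (fun ω => sq_nonneg _)
  have hL0 : 0 ≤ ∫ ω, |f ω - g ω| ∂τ := integral_nonneg (fun ω => abs_nonneg _)
  have hL2 : (∫ ω, |f ω - g ω| ∂τ) ^ 2 ≤ A * V := by
    have hsq := pow_le_pow_left₀ hL0 hCS 2
    have hA2 : (A ^ ((1:ℝ)/2)) ^ (2:ℕ) = A := by
      rw [← Real.rpow_natCast (A ^ ((1:ℝ)/2)) 2, ← Real.rpow_mul hA0]
      norm_num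
    have hV2 : (V ^ ((1:ℝ)/2)) ^ (2:ℕ) = V := by
      rw [← Real.rpow_natCast (V ^ ((1:ℝ)/2)) 2, ← Real.rpow_mul hV0]
      norm_num
    calc (∫ ω, |f ω - g ω| ∂τ) ^ 2 ≤ (A ^ ((1:ℝ)/2) * V ^ ((1:ℝ)/2)) ^ 2 := hsq
      _ = (A ^ ((1:ℝ)/2)) ^ (2:ℕ) * (V ^ ((1:ℝ)/2)) ^ (2:ℕ) := by rw [mul_pow]
      _ = A * V := by rw [hA2, hV2]
  have hD0 : 0 ≤ ∫ ω, B ω ∂τ := le_trans hA0 hu2_le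
  have hfinal : (∫ ω, |f ω - g ω| ∂τ) ^ 2 ≤ (∫ ω, B ω ∂τ) * (2 * (K + β)) := by
    calc (∫ ω, |f ω - g ω| ∂τ) ^ 2 ≤ A * V := hL2
      _ ≤ (∫ ω, B ω ∂τ) * (2 * (K + β)) := mul_le_mul hu2_le hv2_le hV0 hD0
  have hpos : 0 < 2 * (K + β) := by positivity
  rw [one_div, inv_mul_le_iff₀ hpos]
  linarith [hfinal]
end

section
/- Let τ be a probability measure, p ∈ [1,2], β > 0, and f, g ∈ L²(τ). If ‖f‖_{L¹(τ)} ≤ K, then ∫ |g|² (f² + β²)^{(p−2)/2} dτ ≥ (K + β)^{p−2} ‖g‖²_{L¹(τ)}. -/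
open MeasureTheory Real

/-- Weighted Cauchy–Schwarz estimate: for a probability measure `τ`, `p ∈ [1,2]`, `β > 0`,
`f, g ∈ L²(τ)` and `‖f‖_{L¹} ≤ K`, it holds
`∫ |g|² (f²+β²)^{(p−2)/2} dτ ≥ (K+β)^{p−2} ‖g‖²_{L¹}`. -/
theorem stmt_7 {Ω : Type*} [MeasurableSpace Ω] (τ : Measure Ω) [IsProbabilityMeasure τ]
    (p β K : ℝ) (hp1 : 1 ≤ p) (hp2 : p ≤ 2) (hβ : 0 < β) (hK : 0 < K)
    (f g : Ω → ℝ) (hf : MemLp f 2 τ) (hg : MemLp g 2 τ)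
    (hfK : ∫ ω, |f ω| ∂τ ≤ K) :
    (K + β) ^ (p - 2) * (∫ ω, |g ω| ∂τ) ^ 2 ≤
      ∫ ω, (g ω) ^ 2 * ((f ω) ^ 2 + β ^ 2) ^ ((p - 2) / 2) ∂τ := by
  set t : Ω → ℝ := fun ω => (f ω) ^ 2 + β ^ 2 with ht_def
  have htpos : ∀ ω, 0 < t ω := fun ω => by positivity
  set a : Ω → ℝ := fun ω => |g ω| * t ω ^ ((p - 2) / 4) with ha_def
  set b : Ω → ℝ := fun ω => t ω ^ ((2 - p) / 4) with hb_def
  have ha_nonneg : ∀ ω, 0 ≤ a ω := fun ω => by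
    have := (htpos ω).le; positivity
  have hb_nonneg : ∀ ω, 0 ≤ b ω := fun ω => by
    have := (htpos ω).le; positivity
  -- measurability
  have hcont1 : Continuous fun x : ℝ => (x ^ 2 + β ^ 2) ^ ((p - 2) / 4) := by
    apply Continuous.rpow_const ((continuous_pow 2).add continuous_const)
    intro x; left; show x ^ 2 + β ^ 2 ≠ 0; positivity
  have hcont2 : Continuous fun x : ℝ => (x ^ 2 + β ^ 2) ^ ((2 - p) / 4) := by
    apply Continuous.rpow_const ((continuous_pow 2).add continuous_const)
    intro x; left; show x ^ 2 + β ^ 2 ≠ 0; positivity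
  have habs : MemLp (fun ω => |f ω|) 2 τ := by
    simpa [Real.norm_eq_abs] using hf.norm
  have ha_meas : AEStronglyMeasurable a τ := by
    refine AEStronglyMeasurable.mul ?_ (hcont1.comp_aestronglyMeasurable hf.1)
    have : MemLp (fun ω => |g ω|) 2 τ := by simpa [Real.norm_eq_abs] using hg.norm
    exact this.1
  have hb_meas : AEStronglyMeasurable b τ :=
    hcont2.comp_aestronglyMeasurable hf.1
  -- Memℒp a 2
  have hβc : (0:ℝ) < β ^ 2 := by positivity
  have ha2 : MemLp a 2 τ := by
    refine MemLp.of_le_mul (c := (β ^ 2) ^ ((p - 2) / 4)) hg ha_meas ?_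
    filter_upwards with ω
    have ht : t ω ^ ((p - 2) / 4) ≤ (β ^ 2) ^ ((p - 2) / 4) :=
      Real.rpow_le_rpow_of_nonpos hβc (by simp [ht_def]; positivity) (by linarith)
    rw [Real.norm_eq_abs, abs_of_nonneg (ha_nonneg ω), Real.norm_eq_abs]
    calc a ω ≤ |g ω| * (β ^ 2) ^ ((p - 2) / 4) :=
          mul_le_mul_of_nonneg_left ht (abs_nonneg _)
      _ = (β ^ 2) ^ ((p - 2) / 4) * |g ω| := mul_comm _ _
  -- Memℒp b 2
  have hbound : ∀ ω, b ω ≤ 1 + |f ω| + β := by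
    intro ω
    rcases le_or_gt (t ω) 1 with h | h
    · have h1 : b ω ≤ 1 := Real.rpow_le_one (htpos ω).le h (by linarith)
      have h2 : (0:ℝ) ≤ |f ω| := abs_nonneg _
      linarith
    · have h1 : b ω ≤ t ω ^ ((1:ℝ)/2) :=
        Real.rpow_le_rpow_of_exponent_le h.le (by linarith)
      have h2 : t ω ^ ((1:ℝ)/2) ≤ |f ω| + β := by
        rw [← Real.sqrt_eq_rpow]
        have hle : t ω ≤ (|f ω| + β) ^ 2 := by
          simp only [ht_def]; nlinarith [abs_nonneg (f ω), sq_abs (f ω)]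
        calc Real.sqrt (t ω) ≤ Real.sqrt ((|f ω| + β) ^ 2) := Real.sqrt_le_sqrt hle
          _ = |f ω| + β := Real.sqrt_sq (by positivity)
      linarith
  have hfl2 : MemLp (fun ω => 1 + |f ω| + β) 2 τ :=
    ((memLp_const (1:ℝ)).add habs).add (memLp_const β)
  have hb2 : MemLp b 2 τ := by
    refine MemLp.of_le hfl2 hb_meas ?_
    filter_upwards with ω
    rw [Real.norm_eq_abs, abs_of_nonneg (hb_nonneg ω), Real.norm_eq_abs]
    exact (hbound ω).trans (le_abs_self _)
  -- Hölder / Cauchy-Schwarz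
  have hpq : Real.HolderConjugate 2 2 := Real.HolderConjugate.two_two
  have hoff : (ENNReal.ofReal (2:ℝ)) = 2 := by norm_num [ENNReal.ofReal_ofNat]
  have hCS := integral_mul_le_Lp_mul_Lq_of_nonneg (μ := τ) hpq
      (Filter.Eventually.of_forall ha_nonneg) (Filter.Eventually.of_forall hb_nonneg)
      (hoff ▸ ha2) (hoff ▸ hb2)
  have hab : ∀ ω, a ω * b ω = |g ω| := by
    intro ω
    rw [ha_def, hb_def]
    simp only
    rw [mul_assoc, ← Real.rpow_add (htpos ω), show (p-2)/4 + (2-p)/4 = 0 by ring,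
      Real.rpow_zero, mul_one]
  have ha_sq : ∀ ω, a ω ^ (2:ℝ) = (g ω) ^ 2 * t ω ^ ((p - 2) / 2) := by
    intro ω
    rw [Real.rpow_two, ha_def]
    simp only
    rw [mul_pow, sq_abs, ← Real.rpow_natCast (t ω ^ ((p-2)/4)) 2, ← Real.rpow_mul (htpos ω).le,
      show (p-2)/4 * (2:ℕ) = (p-2)/2 by push_cast; ring]
  have hb_sq : ∀ ω, b ω ^ (2:ℝ) = t ω ^ ((2 - p) / 2) := by
    intro ω
    rw [Real.rpow_two, hb_def]
    simp only
    rw [← Real.rpow_natCast (t ω ^ ((2-p)/4)) 2, ← Real.rpow_mul (htpos ω).le,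
      show (2-p)/4 * (2:ℕ) = (2-p)/2 by push_cast; ring]
  -- rewrite the CS inequality
  rw [integral_congr_ae (Filter.Eventually.of_forall hab),
    integral_congr_ae (Filter.Eventually.of_forall ha_sq),
    integral_congr_ae (Filter.Eventually.of_forall hb_sq)] at hCS
  set A : ℝ := ∫ ω, (g ω) ^ 2 * t ω ^ ((p - 2) / 2) ∂τ with hA_def
  set B : ℝ := ∫ ω, t ω ^ ((2 - p) / 2) ∂τ with hB_def
  have hA_nonneg : 0 ≤ A := integral_nonneg fun ω => by
    have := (htpos ω).le; positivity
  have hB_nonneg : 0 ≤ B := integral_nonneg fun ω => by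
    have := (htpos ω).le; positivity
  have key : (∫ ω, |g ω| ∂τ) ^ 2 ≤ A * B := by
    calc (∫ ω, |g ω| ∂τ) ^ 2 ≤ (A ^ ((1:ℝ)/2) * B ^ ((1:ℝ)/2)) ^ 2 := by
          apply pow_le_pow_left₀ (integral_nonneg fun ω => abs_nonneg _) hCS
      _ = A * B := by
          rw [mul_pow, ← Real.rpow_natCast (A ^ ((1:ℝ)/2)) 2, ← Real.rpow_mul hA_nonneg,
            ← Real.rpow_natCast (B ^ ((1:ℝ)/2)) 2, ← Real.rpow_mul hB_nonneg]
          norm_num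
  -- Jensen's inequality for B
  have hf_int : Integrable (fun ω => |f ω| + β) τ :=
    (habs.integrable one_le_two).add (integrable_const β)
  have hbig_int : Integrable (fun ω => 1 + |f ω| + β) τ :=
    hfl2.integrable one_le_two
  have hcont3 : Continuous fun x : ℝ => (|x| + β) ^ (2 - p) := by
    apply Continuous.rpow_const (continuous_abs.add continuous_const)
    intro x; left; show |x| + β ≠ 0; positivity
  have hcomp_int : Integrable (fun ω => (|f ω| + β) ^ (2 - p)) τ := by
    refine Integrable.mono hbig_int (hcont3.comp_aestronglyMeasurable hf.1) ?_
    filter_upwards with ω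
    have hx : (0:ℝ) ≤ |f ω| + β := by positivity
    rw [Real.norm_eq_abs, abs_of_nonneg (Real.rpow_nonneg hx _), Real.norm_eq_abs]
    refine le_trans ?_ (le_abs_self _)
    rcases le_or_gt (|f ω| + β) 1 with h | h
    · have h1 := Real.rpow_le_one hx h (show (0:ℝ) ≤ 2 - p by linarith)
      have h2 : (0:ℝ) ≤ |f ω| := abs_nonneg _
      linarith
    · have h1 : (|f ω| + β) ^ (2 - p) ≤ (|f ω| + β) ^ (1:ℝ) :=
        Real.rpow_le_rpow_of_exponent_le h.le (by linarith)
      rw [Real.rpow_one] at h1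
      linarith
  have jensen : ∫ ω, (|f ω| + β) ^ (2 - p) ∂τ ≤ (∫ ω, (|f ω| + β) ∂τ) ^ (2 - p) := by
    have hconc : ConcaveOn ℝ (Set.Ici 0) fun x : ℝ => x ^ (2 - p) :=
      Real.concaveOn_rpow (by linarith) (by linarith)
    have hgc : ContinuousOn (fun x : ℝ => x ^ (2 - p)) (Set.Ici 0) := by
      apply ContinuousOn.rpow_const continuousOn_id
      intro x _; right; linarith
    exact ConcaveOn.le_map_integral hconc hgc isClosed_Ici
      (Filter.Eventually.of_forall fun ω => by
        simp only [Set.mem_Ici]; positivity) hf_int hcomp_int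
  have hB_le : B ≤ (K + β) ^ (2 - p) := by
    have step1 : B ≤ ∫ ω, (|f ω| + β) ^ (2 - p) ∂τ := by
      refine integral_mono ?_ hcomp_int ?_
      · exact (hb2.integrable_sq).congr (Filter.Eventually.of_forall fun ω => by
          simpa [Real.rpow_two] using hb_sq ω)
      · intro ω
        have h1 : t ω ≤ (|f ω| + β) ^ 2 := by
          simp only [ht_def]; nlinarith [abs_nonneg (f ω), sq_abs (f ω)]
        calc t ω ^ ((2 - p) / 2) ≤ ((|f ω| + β) ^ 2) ^ ((2 - p) / 2) :=
              Real.rpow_le_rpow (htpos ω).le h1 (by linarith)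
          _ = (|f ω| + β) ^ (2 - p) := by
              rw [← Real.rpow_natCast (|f ω| + β) 2, ← Real.rpow_mul (by positivity)]
              congr 1
              push_cast; ring
    have step2 : ∫ ω, (|f ω| + β) ∂τ = (∫ ω, |f ω| ∂τ) + β := by
      rw [integral_add (habs.integrable one_le_two) (integrable_const β)]
      simp
    have step3 : (∫ ω, (|f ω| + β) ∂τ) ^ (2 - p) ≤ (K + β) ^ (2 - p) := by
      rw [step2]
      have h0 : (0:ℝ) ≤ ∫ ω, |f ω| ∂τ := integral_nonneg fun ω => abs_nonneg _
      exact Real.rpow_le_rpow (by linarith) (by linarith) (by linarith)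
    exact step1.trans (jensen.trans step3)
  -- conclude
  have hKβ : (0:ℝ) < K + β := by linarith
  have hcancel : (K + β) ^ (p - 2) * (K + β) ^ (2 - p) = 1 := by
    rw [← Real.rpow_add hKβ, show p - 2 + (2 - p) = 0 by ring, Real.rpow_zero]
  calc (K + β) ^ (p - 2) * (∫ ω, |g ω| ∂τ) ^ 2
      ≤ (K + β) ^ (p - 2) * (A * (K + β) ^ (2 - p)) := by
        refine mul_le_mul_of_nonneg_left ?_ (Real.rpow_nonneg hKβ.le _)
        exact key.trans (mul_le_mul_of_nonneg_left hB_le hA_nonneg)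
    _ = A := by
        rw [mul_comm A, ← mul_assoc, hcancel, one_mul]
    _ = ∫ ω, (g ω) ^ 2 * ((f ω) ^ 2 + β ^ 2) ^ ((p - 2) / 2) ∂τ := rfl
end

section
/- Under the difference-of-squares gradient flow d/dt f_t = −2 f_t F'[f_t²−g_t²], d/dt g_t = 2 g_t F'[f_t²−g_t²], the difference h_t := f_t² − g_t² satisfies d/dt h_t = −4 √(h_t² + β²) · F'[h_t] with β = 2 f₀ g₀; i.e., h_t is the mirror flow of 4F for the hyperbolic entropy η_hyp with parameter β, since η_hyp''(s) = (s² + β²)^{−1/2}. -/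
/-- Difference-of-squares parameterization: under the gradient flow
`d/dt f_t = −2 f_t F'[f_t²−g_t²]`, `d/dt g_t = 2 g_t F'[f_t²−g_t²]`,
the difference `h_t := f_t² − g_t²` satisfies
`d/dt h_t = −4 √(h_t² + β²) F'[h_t]` with `β = 2 f₀ g₀`; i.e. `h_t` is the
`η_hyp`-mirror flow of `4F` (since `η_hyp''(s) = (s²+β²)^{−1/2}`). -/
theorem stmt_11 {Θ : Type*} (F' : (Θ → ℝ) → Θ → ℝ) (f g : ℝ → Θ → ℝ)
    (hf : ∀ t θ, HasDerivAt (fun s => f s θ)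
      (-2 * f t θ * F' (fun x => (f t x) ^ 2 - (g t x) ^ 2) θ) t)
    (hg : ∀ t θ, HasDerivAt (fun s => g s θ)
      (2 * g t θ * F' (fun x => (f t x) ^ 2 - (g t x) ^ 2) θ) t) :
    ∀ t θ, HasDerivAt (fun s => (f s θ) ^ 2 - (g s θ) ^ 2)
      (-4 * Real.sqrt (((f t θ) ^ 2 - (g t θ) ^ 2) ^ 2 + (2 * f 0 θ * g 0 θ) ^ 2)
        * F' (fun x => (f t x) ^ 2 - (g t x) ^ 2) θ) t := by
  intro t θ
  -- conservation: f t θ * g t θ = f 0 θ * g 0 θ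
  have hcons : ∀ s : ℝ, f s θ * g s θ = f 0 θ * g 0 θ := by
    intro s
    refine is_const_of_deriv_eq_zero (fun u => ((hf u θ).mul (hg u θ)).differentiableAt)
      (fun u => ?_) s 0
    have : HasDerivAt (fun u => f u θ * g u θ) 0 u := by
      have h : HasDerivAt (fun u => f u θ * g u θ) _ u := (hf u θ).mul (hg u θ)
      convert h using 1
      ring
    exact this.deriv
  have hdiff : HasDerivAt (fun s => (f s θ) ^ 2 - (g s θ) ^ 2)
      (-4 * ((f t θ) ^ 2 + (g t θ) ^ 2) * F' (fun x => (f t x) ^ 2 - (g t x) ^ 2) θ) t := by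
    have h : HasDerivAt (fun s => (f s θ) ^ 2 - (g s θ) ^ 2) _ t :=
      ((hf t θ).pow 2).sub ((hg t θ).pow 2)
    convert h using 1
    ring
  have hsq : Real.sqrt (((f t θ) ^ 2 - (g t θ) ^ 2) ^ 2 + (2 * f 0 θ * g 0 θ) ^ 2)
      = (f t θ) ^ 2 + (g t θ) ^ 2 := by
    rw [mul_assoc, ← hcons t]
    have : ((f t θ) ^ 2 - (g t θ) ^ 2) ^ 2 + (2 * (f t θ * g t θ)) ^ 2
        = ((f t θ) ^ 2 + (g t θ) ^ 2) ^ 2 := by ring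
    rw [this, Real.sqrt_sq (by positivity)]
  rw [hsq]
  exact hdiff
end
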